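/- Let (T,d) be a metric space, X a Banach space, f : T × X → ℝ∪{±∞}, and B ⊆ T such that the restricted epigraph multifunction B ∋ t ⇒ epi f_t is lower semicontinuous with closed convex values. Suppose α : B → ℝ∪{±∞} is lower semicontinuous with m_f(t) := inf_{x∈X} f_t(x) < α(t) for all t ∈ B. Then there exists a continuous function x : B → X with f_t(x(t)) ≤ α(t) for all t ∈ B. -/

import Mathlib

open MeasureTheory Topology Filter Set Pointwise
open scoped ENNReal NNReal

noncomputable section

/-- Lower semicontinuity (in the set-valued sense) of `Φ` at every point of `B`,
relative to `B`. -/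
def LscOn {T Y : Type*} [TopologicalSpace T] [TopologicalSpace Y]
    (B : Set T) (Φ : T → Set Y) : Prop :=
  ∀ t ∈ B, ∀ V : Set Y, IsOpen V → (Φ t ∩ V).Nonempty →
    ∀ᶠ s in nhdsWithin t B, (Φ s ∩ V).Nonempty

/-- Epigraph of an extended-real-valued function. -/
def epi {X : Type*} (g : X → EReal) : Set (X × ℝ) :=
  {p : X × ℝ | g p.1 ≤ (p.2 : EReal)}

/-- Strict epigraph. -/
def epis {X : Type*} (g : X → EReal) : Set (X × ℝ) :=
  {p : X × ℝ | g p.1 < (p.2 : EReal)}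

/-- Inner regularity of a measure: every measurable set of finite measure can be
approximated from inside by compact sets. -/
def InnerRegularM {T : Type*} [TopologicalSpace T] [MeasurableSpace T]
    (μ : Measure T) : Prop :=
  ∀ ε : ℝ≥0∞, 0 < ε → ∀ B : Set T, MeasurableSet B → μ B < ⊤ →
    ∃ K ⊆ B, IsCompact K ∧ μ (B \ K) < ε

/-- Lusin integrand. -/
def LusinIntegrand {T X : Type*} [TopologicalSpace T] [MeasurableSpace T]
    [TopologicalSpace X] (μ : Measure T) (f : T → X → EReal) : Prop :=
  ∀ ε : ℝ≥0∞, 0 < ε → ∀ A : Set T, MeasurableSet A → μ A < ⊤ →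
    ∃ B ⊆ A, IsCompact B ∧ μ (A \ B) < ε ∧ LscOn B (fun t => epi (f t))

/-- Uniform Lusin family of integrands. -/
def UniformLusinFamily {T X I : Type*} [TopologicalSpace T] [MeasurableSpace T]
    [TopologicalSpace X] (μ : Measure T) (f : I → T → X → EReal) : Prop :=
  ∀ ε : ℝ≥0∞, 0 < ε → ∀ A : Set T, MeasurableSet A → μ A < ⊤ →
    ∃ B ⊆ A, IsCompact B ∧ μ (A \ B) < ε ∧ ∀ i : I, LscOn B (fun t => epi (f i t))

/-- Scorza-Dragoni function. -/
def ScorzaDragoniFun {T X : Type*} [TopologicalSpace T] [MeasurableSpace T]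
    [TopologicalSpace X] (μ : Measure T) (g : T → X → EReal) : Prop :=
  ∀ ε : ℝ≥0∞, 0 < ε → ∀ A : Set T, MeasurableSet A → μ A < ⊤ →
    ∃ B ⊆ A, IsCompact B ∧ μ (A \ B) < ε ∧
      ContinuousOn (fun p : T × X => g p.1 p.2) (B ×ˢ (Set.univ : Set X))

/-- Lusin multifunction (uniform family version). -/
def UniformLusinMultifamily {T X I : Type*} [TopologicalSpace T] [MeasurableSpace T]
    [TopologicalSpace X] (μ : Measure T) (C : I → T → Set X) : Prop :=
  ∀ ε : ℝ≥0∞, 0 < ε → ∀ A : Set T, MeasurableSet A → μ A < ⊤ →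
    ∃ B ⊆ A, IsCompact B ∧ μ (A \ B) < ε ∧ ∀ i : I, LscOn B (C i)

/-- `g ∈ Γ(X)`: proper, convex (convex epigraph) and lower semicontinuous. -/
def InGamma {X : Type*} [AddCommGroup X] [Module ℝ X] [TopologicalSpace X]
    (g : X → EReal) : Prop :=
  (∃ x, g x ≠ ⊤) ∧ (∀ x, g x ≠ ⊥) ∧ LowerSemicontinuous g ∧ Convex ℝ (epi g)

/-- Admissible integrand. -/
def AdmissibleIntegrand {T X : Type*} [TopologicalSpace T] [MeasurableSpace T]
    [NormedAddCommGroup X] [NormedSpace ℝ X] (μ : Measure T)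
    (f : T → X → EReal) : Prop :=
  ∃ (I : Type) (fi : I → T → X → EReal),
    UniformLusinFamily μ fi ∧ (∀ i t, InGamma (fi i t)) ∧
    ∀ t, epi (f t) = closure (epi (fun x => ⨅ i : I, fi i t x))

/-- Admissible multifunction. -/
def AdmissibleMultifunction {T X : Type*} [TopologicalSpace T] [MeasurableSpace T]
    [NormedAddCommGroup X] [NormedSpace ℝ X] (μ : Measure T)
    (C : T → Set X) : Prop :=
  ∃ (I : Type) (Ci : I → T → Set X),
    UniformLusinMultifamily μ Ci ∧ (∀ i t, IsClosed (Ci i t) ∧ Convex ℝ (Ci i t)) ∧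
    ∀ t, C t = closure (⋃ i : I, Ci i t)

open Classical in
/-- Indicator function with values in `EReal`. -/
def indE {X : Type*} (S : Set X) : X → EReal := fun x => if x ∈ S then 0 else ⊤

/-- Positive part of an extended real, as an `ℝ≥0∞`. -/
def ERealPos (x : EReal) : ℝ≥0∞ := if x = ⊤ then ⊤ else ENNReal.ofReal x.toReal

/-- Upper integral of an extended-real-valued function, with the convention
`+∞ + (-∞) = +∞`. -/
def upInt {T : Type*} [MeasurableSpace T] (μ : Measure T) (g : T → EReal) : EReal :=
  if (∫⁻ t, ERealPos (g t) ∂μ) = ⊤ then ⊤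
  else ((∫⁻ t, ERealPos (g t) ∂μ : ℝ≥0∞) : EReal) - ((∫⁻ t, ERealPos (-(g t)) ∂μ : ℝ≥0∞) : EReal)

end


lemma memadd {X : Type*} [NormedAddCommGroup X] (A : Set X) (r : ℝ) (x : X) :
    x ∈ A + Metric.ball 0 r ↔ ∃ y ∈ A, dist x y < r := by
  constructor
  · rintro ⟨y, hy, z, hz, rfl⟩
    exact ⟨y, hy, by simpa [dist_eq_norm] using (by simpa [dist_eq_norm] using hz : ‖z‖ < r)⟩
  · rintro ⟨y, hy, hxy⟩
    exact ⟨y, hy, x - y, by simpa [dist_eq_norm] using hxy, by simp⟩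

theorem stmt4 {T X : Type*} [MetricSpace T]
    [NormedAddCommGroup X] [NormedSpace ℝ X] [CompleteSpace X]
    (f : T → X → EReal) (B : Set T)
    (hlsc : LscOn B (fun t => epi (f t)))
    (hcc : ∀ t ∈ B, IsClosed (epi (f t)) ∧ Convex ℝ (epi (f t)))
    (α : T → EReal) (hα : LowerSemicontinuousOn α B)
    (hlt : ∀ t ∈ B, (⨅ x : X, f t x) < α t) :
    ∃ x : T → X, ContinuousOn x B ∧ ∀ t ∈ B, f t (x t) ≤ α t := by
  classical
  set D : B → Set X := fun b => {x | f b x < α b} with hD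
  have hDne : ∀ b : B, (D b).Nonempty := by
    intro b
    obtain ⟨x, hx⟩ := iInf_lt_iff.mp (hlt b b.2)
    exact ⟨x, hx⟩
  have hDconv : ∀ b : B, Convex ℝ (D b) := by
    intro b x hx y hy a c ha hc hac
    obtain ⟨r, hr1, hr2⟩ := EReal.exists_between_coe_real hx
    obtain ⟨r', hr1', hr2'⟩ := EReal.exists_between_coe_real hy
    have hxe : (x, max r r') ∈ epi (f b) := by
      show f ↑b x ≤ ((max r r' : ℝ) : EReal)
      exact le_trans hr1.le (by exact_mod_cast le_max_left r r')
    have hye : (y, max r r') ∈ epi (f b) := by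
      show f ↑b y ≤ ((max r r' : ℝ) : EReal)
      exact le_trans hr1'.le (by exact_mod_cast le_max_right r r')
    have := (hcc b b.2).2 hxe hye ha hc hac
    have hmem : (a • x + c • y, a * max r r' + c * max r r') ∈ epi (f b) := this
    have heq : a * max r r' + c * max r r' = max r r' := by
      rw [← add_mul, hac, one_mul]
    rw [heq] at hmem
    have hmem' : f ↑b (a • x + c • y) ≤ ((max r r' : ℝ) : EReal) := hmem
    refine lt_of_le_of_lt hmem' ?_
    rcases max_choice r r' with h | h <;> rw [h]
    exacts [hr2, hr2']
  have hclos : ∀ b : B, ∀ x ∈ closure (D b), f b x ≤ α b := by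
    intro b x hx
    by_cases hT : α b = ⊤
    · rw [hT]; exact le_top
    have hbot : α b ≠ ⊥ := by
      intro h
      obtain ⟨y, hy⟩ := hDne b
      have hy' : f ↑b y < α ↑b := hy
      rw [h] at hy'
      exact not_lt_bot hy'
    have ha : ((α ↑b).toReal : EReal) = α b := EReal.coe_toReal hT hbot
    set a := (α ↑b).toReal
    have hCc : IsClosed {z : X | (z, a) ∈ epi (f ↑b)} :=
      (hcc b b.2).1.preimage (continuous_id.prodMk continuous_const)
    have hsub : D b ⊆ {z : X | (z, a) ∈ epi (f ↑b)} := by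
      intro z hz
      show f ↑b z ≤ (a : EReal)
      rw [ha]
      exact le_of_lt hz
    have := closure_minimal hsub hCc hx
    calc f ↑b x ≤ (a : EReal) := this
      _ = α b := ha
  have hDlsc : ∀ (b : B) (x₀ : X), x₀ ∈ D b → ∀ ρ : ℝ, 0 < ρ →
      ∀ᶠ s : B in 𝓝 b, ∃ x ∈ D s, dist x x₀ < ρ := by
    intro b x₀ hx₀ ρ hρ
    obtain ⟨c, hc1, hc2⟩ := EReal.exists_between_coe_real (hx₀ : f ↑b x₀ < α ↑b)
    obtain ⟨c', hc'1, hc'2⟩ := EReal.exists_between_coe_real hc1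
    have hc'c : c' < c := by exact_mod_cast hc'2
    have hV : IsOpen (Metric.ball x₀ ρ ×ˢ Iio c) := Metric.isOpen_ball.prod isOpen_Iio
    have hne : (epi (f ↑b) ∩ (Metric.ball x₀ ρ ×ˢ Iio c)).Nonempty :=
      ⟨(x₀, c'), hc'1.le, Set.mem_prod.mpr ⟨Metric.mem_ball_self hρ, hc'c⟩⟩
    have E1 := hlsc ↑b b.2 _ hV hne
    have E2 : ∀ᶠ s in 𝓝[B] (b : T), (c : EReal) < α s := hα ↑b b.2 _ hc2
    have := E1.and E2
    rw [← eventually_nhds_subtype_iff B b] at this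
    filter_upwards [this] with s hs
    obtain ⟨⟨⟨x, aa⟩, hepi, hVm⟩, hcs⟩ := hs
    refine ⟨x, ?_, Metric.mem_ball.mp hVm.1⟩
    have haa : (aa : EReal) < (c : EReal) := by exact_mod_cast hVm.2
    exact lt_trans (lt_of_le_of_lt hepi haa) hcs
  -- core iteration step
  have key : ∀ (ε δ : ℝ), 0 < δ → ∀ g : B → X, Continuous g →
      (∀ b, ∃ y ∈ D b, dist (g b) y < ε) →
      ∃ h : B → X, Continuous h ∧ (∀ b, ∃ y ∈ D b, dist (h b) y < δ) ∧
        ∀ b, dist (h b) (g b) < ε + δ := by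
    intro ε δ hδ g hg hgD
    have hconv : ∀ b : B, Convex ℝ ((D b ∩ Metric.ball (g b) ε) + Metric.ball 0 δ) :=
      fun b => ((hDconv b).inter (convex_ball _ _)).add (convex_ball _ _)
    have H : ∀ b₀ : B, ∃ c : X, ∀ᶠ s in 𝓝 b₀,
        c ∈ (D s ∩ Metric.ball (g s) ε) + Metric.ball 0 δ := by
      intro b₀
      obtain ⟨y₀, hy₀D, hy₀⟩ := hgD b₀
      set η := ε - dist (g b₀) y₀ with hη
      have hηpos : 0 < η := sub_pos.mpr hy₀
      refine ⟨y₀, ?_⟩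
      have Ev1 := hDlsc b₀ y₀ hy₀D (min δ (η / 2)) (lt_min hδ (by linarith))
      have Ev2 : ∀ᶠ s : B in 𝓝 b₀, dist (g s) (g b₀) < η / 2 :=
        (Metric.tendsto_nhds.mp (hg.tendsto b₀)) (η / 2) (by linarith)
      filter_upwards [Ev1, Ev2] with s hs1 hs2
      obtain ⟨x, hxD, hxy⟩ := hs1
      rw [memadd]
      refine ⟨x, ⟨hxD, ?_⟩, ?_⟩
      · rw [Metric.mem_ball]
        have : dist x (g s) ≤ dist x y₀ + dist y₀ (g b₀) + dist (g b₀) (g s) :=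
          dist_triangle4 x y₀ (g b₀) (g s)
        have h1 : dist x y₀ < η / 2 := lt_of_lt_of_le hxy (min_le_right _ _)
        have h2 : dist y₀ (g b₀) = ε - η := by rw [hη, dist_comm]; ring
        have h3 : dist (g b₀) (g s) < η / 2 := by rwa [dist_comm]
        linarith
      · rw [dist_comm]; exact lt_of_lt_of_le hxy (min_le_left _ _)
    obtain ⟨h, hh⟩ := exists_continuous_forall_mem_convex_of_local_const hconv H
    refine ⟨h, h.continuous, ?_, ?_⟩
    · intro b
      obtain ⟨x, ⟨hxD, _⟩, hx⟩ := (memadd _ _ _).mp (hh b)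
      exact ⟨x, hxD, hx⟩
    · intro b
      obtain ⟨x, ⟨_, hxb⟩, hx⟩ := (memadd _ _ _).mp (hh b)
      calc dist (h b) (g b) ≤ dist (h b) x + dist x (g b) := dist_triangle _ _ _
        _ < δ + ε := add_lt_add hx (Metric.mem_ball.mp hxb)
        _ = ε + δ := add_comm _ _
  -- base function
  have base : ∃ g : B → X, Continuous g ∧ ∀ b, ∃ y ∈ D b, dist (g b) y < 1 := by
    have hconv : ∀ b : B, Convex ℝ (D b + Metric.ball 0 1) :=
      fun b => (hDconv b).add (convex_ball _ _)
    have H : ∀ b₀ : B, ∃ c : X, ∀ᶠ s in 𝓝 b₀, c ∈ D s + Metric.ball 0 1 := by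
      intro b₀
      obtain ⟨y₀, hy₀⟩ := hDne b₀
      refine ⟨y₀, ?_⟩
      filter_upwards [hDlsc b₀ y₀ hy₀ 1 one_pos] with s hs
      obtain ⟨x, hxD, hxy⟩ := hs
      exact (memadd _ _ _).mpr ⟨x, hxD, by rwa [dist_comm]⟩
    obtain ⟨g, hgm⟩ := exists_continuous_forall_mem_convex_of_local_const hconv H
    refine ⟨g, g.continuous, fun b => ?_⟩
    exact (memadd _ _ _).mp (hgm b)
  obtain ⟨g₀, hg₀c, hg₀⟩ := base
  -- build the sequence
  have step : ∀ (n : ℕ) (g : B → X), Continuous g →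
      (∀ b, ∃ y ∈ D b, dist (g b) y < (1/2 : ℝ) ^ n) →
      ∃ h : B → X, Continuous h ∧ (∀ b, ∃ y ∈ D b, dist (h b) y < (1/2 : ℝ) ^ (n+1)) ∧
        ∀ b, dist (h b) (g b) < (1/2 : ℝ) ^ n + (1/2 : ℝ) ^ (n+1) :=
    fun n g hg hgD => key _ _ (by positivity) g hg hgD
  choose! next hn1 hn2 hn3 using step
  set u : ℕ → (B → X) := fun n => Nat.rec g₀ (fun n g => next n g) n with hu
  have hu0 : u 0 = g₀ := rfl
  have husucc : ∀ n, u (n+1) = next n (u n) := fun n => rfl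
  have hP : ∀ n, Continuous (u n) ∧ ∀ b, ∃ y ∈ D b, dist (u n b) y < (1/2 : ℝ) ^ n := by
    intro n
    induction n with
    | zero => exact ⟨hg₀c, by simpa [hu0] using hg₀⟩
    | succ n ih =>
      rw [husucc]
      exact ⟨hn1 n (u n) ih.1 ih.2, hn2 n (u n) ih.1 ih.2⟩
  have hcons : ∀ n b, dist (u n b) (u (n+1) b) ≤ 4 / 2 / 2 ^ n := by
    intro n b
    have hstep := hn3 n (u n) (hP n).1 (hP n).2 b
    rw [husucc n, dist_comm]
    have h1 : (4:ℝ)/2/2^n = 2 * (1/2)^n := by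
      rw [div_pow, one_pow, mul_one_div]
      norm_num
    have h2 : (1/2 : ℝ) ^ (n+1) = (1/2) * (1/2)^n := by ring
    have h3 : (0:ℝ) ≤ (1/2:ℝ)^n := pow_nonneg (by norm_num) n
    linarith
  have hcauchy : ∀ b : B, ∃ L : X, Tendsto (fun n => u n b) atTop (𝓝 L) := by
    intro b
    exact cauchySeq_tendsto_of_complete (cauchySeq_of_le_geometric_two (fun n => hcons n b))
  choose L hL using hcauchy
  have hdistL : ∀ n b, dist (u n b) (L b) ≤ 4 / 2 ^ n :=
    fun n b => dist_le_of_le_geometric_two_of_tendsto (fun m => hcons m b) (hL b) n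
  have h4pow : Tendsto (fun n : ℕ => (4 : ℝ) / 2 ^ n) atTop (𝓝 0) := by
    have := (tendsto_pow_atTop_nhds_zero_of_lt_one
      (by norm_num : (0:ℝ) ≤ 1/2) (by norm_num : (1/2:ℝ) < 1)).const_mul (4:ℝ)
    simp only [mul_zero] at this
    convert this using 2 with n
    rw [div_pow, one_pow, mul_one_div]
  have hunif : TendstoUniformly (fun n b => u n b) L atTop := by
    rw [Metric.tendstoUniformly_iff]
    intro ε hε
    filter_upwards [h4pow.eventually_lt_const hε] with n hn b
    rw [dist_comm]
    exact lt_of_le_of_lt (hdistL n b) hn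
  have hLc : Continuous L := hunif.continuous (Eventually.of_forall fun n => (hP n).1).frequently
  have hmem : ∀ b : B, f ↑b (L b) ≤ α ↑b := by
    intro b
    refine hclos b _ ?_
    rw [Metric.mem_closure_iff]
    intro ε hε
    have hsum : Tendsto (fun n : ℕ => (4 : ℝ) / 2 ^ n + (1/2)^n) atTop (𝓝 0) := by
      have := h4pow.add (tendsto_pow_atTop_nhds_zero_of_lt_one
        (by norm_num : (0:ℝ) ≤ 1/2) (by norm_num : (1/2:ℝ) < 1))
      simpa using this
    obtain ⟨n, hn⟩ := (hsum.eventually_lt_const hε).exists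
    obtain ⟨y, hyD, hy⟩ := (hP n).2 b
    refine ⟨y, hyD, ?_⟩
    calc dist (L b) y ≤ dist (L b) (u n b) + dist (u n b) y := dist_triangle _ _ _
      _ < 4 / 2 ^ n + (1/2)^n := by
          have := hdistL n b
          rw [dist_comm] at this ⊢
          exact add_lt_add_of_le_of_lt (by rwa [dist_comm]) hy
      _ < ε := hn
  refine ⟨fun t => if h : t ∈ B then L ⟨t, h⟩ else 0, ?_, ?_⟩
  · rw [continuousOn_iff_continuous_restrict]
    convert hLc using 1
    ext b
    simp only [Set.restrict_apply, b.2, dif_pos, Subtype.coe_eta]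
  · intro t ht
    simpa only [dif_pos ht] using hmem ⟨t, ht⟩
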